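/- Let m ≥ 2 be an integer and α ∈ [0,1]. Let Δ^m be the channel on m×m matrices Δ^m(σ) := Σ_{j=1}^m ⟨j|σ|j⟩ |j⟩⟨j|, and let M be the channel whose Choi operator is (1−α)·J^{Δ^m} + (α/(m−1))·(I_{m²} − J^{Δ^m}), where J^{Δ^m} := Σ_{j=1}^m |j⟩⟨j|⊗|j⟩⟨j|. Then for every finite-dimensional Hilbert space R and every density matrix ρ on R⊗ℂ^m, ‖(id_R⊗M)(ρ) − (id_R⊗Δ^m)(ρ)‖₁ ≤ 2α; moreover equality holds for ρ = |0⟩⟨0|_R ⊗ |0⟩⟨0|. -/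

import Mathlib

/-!
STATEMENT 6: For m ≥ 2 and α ∈ [0,1], the channel M with Choi operator
(1−α)·J^{Δ^m} + (α/(m−1))·(I − J^{Δ^m}) satisfies, for every reference R and every
density matrix ρ on R⊗ℂ^m, ‖(id_R⊗M)(ρ) − (id_R⊗Δ^m)(ρ)‖₁ ≤ 2α, with equality for
ρ = |0⟩⟨0|_R ⊗ |0⟩⟨0|.
-/

open Matrix
open scoped Classical ComplexOrder

namespace ICO

/-- Trace norm of a Hermitian matrix: the sum of the absolute values of its eigenvalues
(junk value 0 on non-Hermitian matrices). -/
noncomputable def traceNorm {n : Type} [Fintype n] [DecidableEq n]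
    (H : Matrix n n ℂ) : ℝ :=
  if h : H.IsHermitian then ∑ i, |h.eigenvalues i| else 0

/-- A density matrix: positive semidefinite with unit trace. -/
def IsDensity {n : Type} [Fintype n] (ρ : Matrix n n ℂ) : Prop :=
  ρ.PosSemidef ∧ ρ.trace = 1

/-- Action of the channel with Choi operator `J` (on A⊗B) on a state of R⊗A,
acting as the identity on the reference R:  `(id_R ⊗ C)(ρ)`. -/
noncomputable def applyChoi {A B R : Type} [Fintype A]
    (J : Matrix (A × B) (A × B) ℂ) (ρ : Matrix (R × A) (R × A) ℂ) :
    Matrix (R × B) (R × B) ℂ :=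
  Matrix.of fun p q => ∑ a : A, ∑ a' : A, ρ (p.1, a) (q.1, a') * J (a, p.2) (a', q.2)

/-- Choi operator of the noiseless classical channel `Δ^m`. -/
noncomputable def JDelta (m : ℕ) : Matrix (Fin m × Fin m) (Fin m × Fin m) ℂ :=
  Matrix.of fun p q => if p.1 = p.2 ∧ q.1 = q.2 ∧ p.1 = q.1 then 1 else 0

/-! ### Auxiliary lemmas -/

section Aux
open Polynomial

lemma diag_re_nonneg' {n : Type} [Fintype n] {M : Matrix n n ℂ} (hM : M.PosSemidef) (i : n) :
    0 ≤ (M i i).re := by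
  have h := hM.dotProduct_mulVec_nonneg (Pi.single i 1)
  have heq : M i i = dotProduct (star (Pi.single i 1)) (M *ᵥ (Pi.single i 1)) := by
    simp [dotProduct, Matrix.mulVec, Pi.single_apply, Finset.sum_ite_eq]
  rw [heq]
  exact (Complex.le_def.mp h).1

lemma traceNorm_sub_le' {n : Type} [Fintype n] [DecidableEq n] {P N : Matrix n n ℂ}
    (hP : P.PosSemidef) (hN : N.PosSemidef) :
    traceNorm (P - N) ≤ (P.trace + N.trace).re := by
  have hH : (P - N).IsHermitian := hP.1.sub hN.1
  rw [traceNorm, dif_pos hH]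
  set U : Matrix n n ℂ := (hH.eigenvectorUnitary : Matrix n n ℂ) with hU
  have hP' : (Uᴴ * P * U).PosSemidef := hP.conjTranspose_mul_mul_same U
  have hN' : (Uᴴ * N * U).PosSemidef := hN.conjTranspose_mul_mul_same U
  have hdiag : Uᴴ * (P - N) * U = diagonal (RCLike.ofReal ∘ hH.eigenvalues) := by
    rw [← hH.conjStarAlgAut_star_eigenvectorUnitary, Unitary.conjStarAlgAut_star_apply]; rfl
  have hentry : ∀ i, hH.eigenvalues i = ((Uᴴ * P * U) i i).re - ((Uᴴ * N * U) i i).re := by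
    intro i
    have h1 : (Uᴴ * (P - N) * U) i i = ((hH.eigenvalues i : ℝ) : ℂ) := by
      rw [hdiag]; simp
    rw [Matrix.mul_sub, Matrix.sub_mul] at h1
    have := congrArg Complex.re h1
    simpa [Matrix.sub_apply] using this.symm
  have habs : ∀ i, |hH.eigenvalues i| ≤ ((Uᴴ * P * U) i i).re + ((Uᴴ * N * U) i i).re := by
    intro i
    rw [hentry i]
    calc |((Uᴴ * P * U) i i).re - ((Uᴴ * N * U) i i).re| ≤
        |((Uᴴ * P * U) i i).re| + |((Uᴴ * N * U) i i).re| := abs_sub _ _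
      _ = _ := by rw [abs_of_nonneg (diag_re_nonneg' hP' i), abs_of_nonneg (diag_re_nonneg' hN' i)]
  calc ∑ i, |hH.eigenvalues i| ≤ ∑ i, (((Uᴴ * P * U) i i).re + ((Uᴴ * N * U) i i).re) :=
        Finset.sum_le_sum fun i _ => habs i
    _ = ((Uᴴ * P * U).trace + (Uᴴ * N * U).trace).re := by
        simp [Matrix.trace, Matrix.diag, Complex.add_re, Finset.sum_add_distrib]
    _ = (P.trace + N.trace).re := by
        have h1 : Uᴴ * P * U = star U * P * U := by rw [Matrix.star_eq_conjTranspose]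
        have h2 : U * star U = 1 := Unitary.coe_mul_star_self hH.eigenvectorUnitary
        have h3 : Uᴴ * N * U = star U * N * U := by rw [Matrix.star_eq_conjTranspose]
        rw [h1, h3, Matrix.trace_mul_cycle, Matrix.trace_mul_cycle (star U) N U,
          h2, Matrix.one_mul, Matrix.one_mul]

lemma charmatrix_diagonal' {n : Type} [Fintype n] [DecidableEq n] (d : n → ℂ) :
    charmatrix (Matrix.diagonal d) = Matrix.diagonal (fun i => (X : ℂ[X]) - C (d i)) := by
  ext i j
  by_cases h : i = j
  · subst h; simp [charmatrix_apply_eq]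
  · rw [charmatrix_apply_ne _ _ _ h, Matrix.diagonal_apply_ne _ h, Matrix.diagonal_apply_ne _ h,
      map_zero, neg_zero]

lemma charpoly_diagonal' {n : Type} [Fintype n] [DecidableEq n] (d : n → ℂ) :
    (Matrix.diagonal d).charpoly = ∏ i, ((X : ℂ[X]) - C (d i)) := by
  rw [Matrix.charpoly, charmatrix_diagonal', Matrix.det_diagonal]

lemma charpoly_conj_unitary' {n : Type} [Fintype n] [DecidableEq n]
    (U : Matrix.unitaryGroup n ℂ) (D : Matrix n n ℂ) :
    ((U : Matrix n n ℂ) * D * star (U : Matrix n n ℂ)).charpoly = D.charpoly := by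
  set V : Matrix n n ℂ := (U : Matrix n n ℂ)
  have hUV : V * star V = 1 := Unitary.coe_mul_star_self U
  have hVU : star V * V = 1 := Unitary.coe_star_mul_self U
  have key : charmatrix (V * D * star V) =
      (V.map C) * charmatrix D * ((star V).map C) := by
    unfold charmatrix
    rw [Matrix.mul_sub, Matrix.sub_mul]
    congr 1
    · have hc : V.map C * (Matrix.scalar n) (X:ℂ[X]) = (Matrix.scalar n) (X:ℂ[X]) * V.map C :=
        ((Matrix.scalar_commute (X:ℂ[X]) (Commute.all _) (V.map C))).symm
      rw [hc, Matrix.mul_assoc, ← Matrix.map_mul, hUV]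
      simp
    · simp [RingHom.mapMatrix_apply, Matrix.map_mul, Matrix.mul_assoc]
  rw [Matrix.charpoly, Matrix.charpoly, key, Matrix.det_mul, Matrix.det_mul, mul_comm,
    ← mul_assoc, ← Matrix.det_mul, ← Matrix.map_mul, hVU]
  simp

lemma charpoly_hermitian' {n : Type} [Fintype n] [DecidableEq n] {H : Matrix n n ℂ}
    (h : H.IsHermitian) :
    H.charpoly = ∏ i, ((X : ℂ[X]) - C ((h.eigenvalues i : ℂ))) := by
  conv_lhs => rw [h.spectral_theorem]
  rw [Unitary.conjStarAlgAut_apply]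
  rw [charpoly_conj_unitary' h.eigenvectorUnitary, charpoly_diagonal']
  rfl

lemma eigenvalues_multiset_diagonal' {n : Type} [Fintype n] [DecidableEq n]
    (f : n → ℝ) (h : (Matrix.diagonal (fun i => (f i : ℂ))).IsHermitian) :
    Multiset.map (fun i => ((h.eigenvalues i : ℝ) : ℂ)) Finset.univ.val
      = Multiset.map (fun i => ((f i : ℝ) : ℂ)) Finset.univ.val := by
  have h1 := charpoly_hermitian' h
  rw [charpoly_diagonal'] at h1
  have r1 : (∏ i, ((X : ℂ[X]) - C ((f i : ℂ)))).roots
      = Multiset.map (fun i => ((f i : ℝ) : ℂ)) Finset.univ.val := by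
    have h2 := roots_multiset_prod_X_sub_C
      (Multiset.map (fun i => ((f i : ℝ) : ℂ)) Finset.univ.val)
    rw [Multiset.map_map] at h2
    simp only [Function.comp_def] at h2
    rw [Finset.prod_eq_multiset_prod]
    exact h2
  have r2 : (∏ i, ((X : ℂ[X]) - C ((h.eigenvalues i : ℂ)))).roots
      = Multiset.map (fun i => ((h.eigenvalues i : ℝ) : ℂ)) Finset.univ.val := by
    have h2 := roots_multiset_prod_X_sub_C
      (Multiset.map (fun i => ((h.eigenvalues i : ℝ) : ℂ)) Finset.univ.val)
    rw [Multiset.map_map] at h2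
    simp only [Function.comp_def] at h2
    rw [Finset.prod_eq_multiset_prod]
    exact h2
  rw [← r1, ← r2, h1]

lemma traceNorm_diagonal_real' {n : Type} [Fintype n] [DecidableEq n] (f : n → ℝ) :
    traceNorm (Matrix.diagonal (fun i => (f i : ℂ))) = ∑ i, |f i| := by
  have h : (Matrix.diagonal (fun i => (f i : ℂ))).IsHermitian := by
    rw [Matrix.IsHermitian]
    ext i j
    by_cases hij : i = j
    · subst hij
      simp [Matrix.conjTranspose_apply, Complex.conj_ofReal]
    · simp [Matrix.conjTranspose_apply, Matrix.diagonal_apply_ne _ hij,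
        Matrix.diagonal_apply_ne _ (Ne.symm hij)]
  rw [traceNorm, dif_pos h]
  have key := congrArg (fun s : Multiset ℂ => (Multiset.map (fun z : ℂ => |z.re|) s).sum)
    (eigenvalues_multiset_diagonal' f h)
  simp only [Multiset.map_map, Function.comp, Complex.ofReal_re] at key
  rw [Finset.sum_eq_multiset_sum, Finset.sum_eq_multiset_sum]
  exact key

end Aux

section Chan
set_option linter.unusedSectionVars false

variable {m : ℕ} {R : Type} [Fintype R] [DecidableEq R]

lemma applyChoi_add (J K : Matrix (Fin m × Fin m) (Fin m × Fin m) ℂ)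
    (ρ : Matrix (R × Fin m) (R × Fin m) ℂ) :
    applyChoi (J + K) ρ = applyChoi J ρ + applyChoi K ρ := by
  ext p q
  simp [applyChoi, mul_add, Finset.sum_add_distrib]

lemma applyChoi_sub (J K : Matrix (Fin m × Fin m) (Fin m × Fin m) ℂ)
    (ρ : Matrix (R × Fin m) (R × Fin m) ℂ) :
    applyChoi (J - K) ρ = applyChoi J ρ - applyChoi K ρ := by
  ext p q
  simp [applyChoi, mul_sub, Finset.sum_sub_distrib]

lemma applyChoi_smul (r : ℝ) (J : Matrix (Fin m × Fin m) (Fin m × Fin m) ℂ)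
    (ρ : Matrix (R × Fin m) (R × Fin m) ℂ) :
    applyChoi (r • J) ρ = r • applyChoi J ρ := by
  ext p q
  simp only [applyChoi, Matrix.smul_apply, Matrix.of_apply, Finset.smul_sum, Complex.real_smul]
  refine Finset.sum_congr rfl fun a _ => Finset.sum_congr rfl fun a' _ => by ring

lemma applyChoi_JDelta (ρ : Matrix (R × Fin m) (R × Fin m) ℂ) :
    applyChoi (JDelta m) ρ =
      Matrix.of fun p q => if p.2 = q.2 then ρ (p.1, p.2) (q.1, p.2) else 0 := by
  ext p q
  simp only [applyChoi, JDelta, Matrix.of_apply]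
  have step : ∀ a a' : Fin m, ρ (p.1, a) (q.1, a') *
      (if a = p.2 ∧ a' = q.2 ∧ a = a' then (1:ℂ) else 0) =
      if a = p.2 then (if a' = q.2 then (if p.2 = q.2 then ρ (p.1, a) (q.1, a') else 0) else 0)
        else 0 := by
    intro a a'
    by_cases h1 : a = p.2 <;> by_cases h2 : a' = q.2 <;> by_cases h3 : p.2 = q.2 <;>
      simp [h1, h2, h3]
  simp only [step, Finset.sum_ite_eq', Finset.mem_univ, if_true]
  by_cases h : p.2 = q.2 <;> simp [h]

lemma applyChoi_one (ρ : Matrix (R × Fin m) (R × Fin m) ℂ) :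
    applyChoi (1 : Matrix (Fin m × Fin m) (Fin m × Fin m) ℂ) ρ =
      Matrix.of fun p q => if p.2 = q.2 then ∑ a, ρ (p.1, a) (q.1, a) else 0 := by
  ext p q
  simp only [applyChoi, Matrix.of_apply, Matrix.one_apply]
  have step : ∀ a a' : Fin m, ρ (p.1, a) (q.1, a') *
      (if ((a, p.2) : Fin m × Fin m) = (a', q.2) then (1:ℂ) else 0) =
      if a = a' then (if p.2 = q.2 then ρ (p.1, a) (q.1, a') else 0) else 0 := by
    intro a a'
    by_cases h1 : a = a' <;> by_cases h2 : p.2 = q.2 <;>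
      simp [h1, h2, Prod.ext_iff]
  simp only [step, Finset.sum_ite_eq, Finset.mem_univ, if_true]
  by_cases h : p.2 = q.2 <;> simp [h]

lemma applyChoi_expand (α β : ℝ) (ρ : Matrix (R × Fin m) (R × Fin m) ℂ) :
    applyChoi ((1 - α) • JDelta m + β •
        ((1 : Matrix (Fin m × Fin m) (Fin m × Fin m) ℂ) - JDelta m)) ρ
      - applyChoi (JDelta m) ρ
    = Matrix.of fun p q => if p.2 = q.2 then
        (β : ℂ) * (∑ a, ρ (p.1, a) (q.1, a)) - ((α : ℂ) + β) * ρ (p.1, p.2) (q.1, p.2)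
      else 0 := by
  rw [applyChoi_add, applyChoi_smul, applyChoi_smul, applyChoi_sub, applyChoi_one,
    applyChoi_JDelta]
  ext p q
  simp only [Matrix.add_apply, Matrix.sub_apply, Matrix.smul_apply, Matrix.of_apply]
  by_cases h : p.2 = q.2
  · simp only [h, if_true, Complex.real_smul]
    push_cast
    ring
  · simp [h]

lemma real_mul_nonneg {α : ℝ} (hα : 0 ≤ α) {z : ℂ} (hz : 0 ≤ z) : 0 ≤ (α : ℂ) * z := by
  rw [Complex.le_def] at hz ⊢
  constructor
  · simp only [Complex.mul_re, Complex.ofReal_re, Complex.ofReal_im, Complex.zero_re] at *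
    nlinarith [hz.1]
  · simp only [Complex.mul_im, Complex.ofReal_re, Complex.ofReal_im, Complex.zero_im] at *
    rw [← hz.2]; ring

lemma quad_expand (ρ : Matrix (R × Fin m) (R × Fin m) ℂ) (x : R × Fin m → ℂ) (a b : Fin m) :
    star (fun u : R × Fin m => if u.2 = a then x (u.1, b) else 0) ⬝ᵥ
      ρ *ᵥ (fun u : R × Fin m => if u.2 = a then x (u.1, b) else 0)
    = ∑ r : R, ∑ r' : R, star (x (r, b)) * ρ (r, a) (r', a) * x (r', b) := by
  simp only [dotProduct, Matrix.mulVec, Pi.star_apply, Fintype.sum_prod_type,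
    apply_ite (star (R := ℂ)), star_zero, ite_mul, zero_mul, mul_ite, mul_zero,
    Finset.sum_ite_eq', Finset.mem_univ, if_true]
  refine Finset.sum_congr rfl fun r _ => ?_
  rw [Finset.mul_sum]
  refine Finset.sum_congr rfl fun r' _ => by ring

/-- The building block matrix. -/
noncomputable def MM (ρ : Matrix (R × Fin m) (R × Fin m) ℂ) (a b : Fin m) :
    Matrix (R × Fin m) (R × Fin m) ℂ :=
  Matrix.of fun p q => if p.2 = b ∧ q.2 = b then ρ (p.1, a) (q.1, a) else 0

lemma MM_posSemidef {ρ : Matrix (R × Fin m) (R × Fin m) ℂ} (hρ : ρ.PosSemidef) (a b : Fin m) :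
    (MM ρ a b).PosSemidef := by
  have herm : ∀ u v, star (ρ u v) = ρ v u := fun u v => by
    rw [← Matrix.conjTranspose_apply, hρ.1]
  refine Matrix.PosSemidef.of_dotProduct_mulVec_nonneg ?_ ?_
  · ext p q
    simp only [Matrix.conjTranspose_apply, MM, Matrix.of_apply]
    by_cases h1 : p.2 = b <;> by_cases h2 : q.2 = b <;> simp [h1, h2, herm]
  · intro x
    have key : star x ⬝ᵥ ((MM ρ a b) *ᵥ x)
        = ∑ r : R, ∑ r' : R, star (x (r, b)) * ρ (r, a) (r', a) * x (r', b) := by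
      simp only [MM, dotProduct, Matrix.mulVec, Matrix.of_apply, Pi.star_apply,
        Fintype.sum_prod_type, ite_mul, zero_mul, mul_ite, mul_zero, ite_and,
        Finset.sum_ite_irrel, Finset.sum_const_zero,
        Finset.sum_ite_eq, Finset.sum_ite_eq', Finset.mem_univ, if_true]
      refine Finset.sum_congr rfl fun r _ => ?_
      rw [Finset.mul_sum]
      refine Finset.sum_congr rfl fun r' _ => by ring
    rw [key, ← quad_expand ρ x a b]
    exact hρ.dotProduct_mulVec_nonneg _

lemma posSemidef_sum {ι : Type} (s : Finset ι) (f : ι → Matrix (R × Fin m) (R × Fin m) ℂ)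
    (h : ∀ i ∈ s, (f i).PosSemidef) : (∑ i ∈ s, f i).PosSemidef := by
  classical
  induction s using Finset.induction_on with
  | empty => simpa using Matrix.PosSemidef.zero
  | insert c t hns ih =>
      rw [Finset.sum_insert hns]
      exact (h c (Finset.mem_insert_self c t)).add
        (ih fun i hi => h i (Finset.mem_insert_of_mem hi))

lemma posSemidef_real_smul {A : Matrix (R × Fin m) (R × Fin m) ℂ} (hA : A.PosSemidef)
    {r : ℝ} (hr : 0 ≤ r) : (r • A).PosSemidef := by
  refine Matrix.PosSemidef.of_dotProduct_mulVec_nonneg ?_ ?_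
  · rw [Matrix.IsHermitian, Matrix.conjTranspose_smul, hA.1]
    norm_num
  · intro x
    rw [Matrix.smul_mulVec, dotProduct_smul, Complex.real_smul]
    exact real_mul_nonneg hr (hA.dotProduct_mulVec_nonneg x)

lemma MM_trace (ρ : Matrix (R × Fin m) (R × Fin m) ℂ) (a b : Fin m) :
    (MM ρ a b).trace = ∑ r : R, ρ (r, a) (r, a) := by
  simp only [Matrix.trace, Matrix.diag, MM, Matrix.of_apply, Fintype.sum_prod_type, and_self,
    Finset.sum_ite_eq', Finset.mem_univ, if_true]

lemma sumMM_apply (ρ : Matrix (R × Fin m) (R × Fin m) ℂ) (p q : R × Fin m) :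
    (∑ b : Fin m, ∑ a ∈ Finset.univ.erase b, MM ρ a b) p q
      = if p.2 = q.2 then (∑ a, ρ (p.1, a) (q.1, a)) - ρ (p.1, p.2) (q.1, p.2) else 0 := by
  simp only [Matrix.sum_apply, MM, Matrix.of_apply, ite_and, Finset.sum_ite_irrel,
    Finset.sum_const_zero, Finset.sum_ite_eq, Finset.mem_univ, if_true]
  by_cases h : p.2 = q.2
  · simp only [h, if_true]
    rw [← h, Finset.sum_erase_eq_sub (Finset.mem_univ p.2)]
  · simp [h, Ne.symm h]

lemma sumMMdiag_apply (ρ : Matrix (R × Fin m) (R × Fin m) ℂ) (p q : R × Fin m) :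
    (∑ b : Fin m, MM ρ b b) p q
      = if p.2 = q.2 then ρ (p.1, p.2) (q.1, p.2) else 0 := by
  simp only [Matrix.sum_apply, MM, Matrix.of_apply, ite_and, Finset.sum_ite_irrel,
    Finset.sum_const_zero, Finset.sum_ite_eq, Finset.mem_univ, if_true]
  by_cases h : p.2 = q.2
  · simp [h]
  · simp [h, Ne.symm h]

end Chan

theorem traceNorm_noisy_delta_le (m : ℕ) (hm : 2 ≤ m) (α : ℝ) (hα₀ : 0 ≤ α) (hα₁ : α ≤ 1)
    (R : Type) [Fintype R] [DecidableEq R] [Inhabited R] :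
    (∀ ρ : Matrix (R × Fin m) (R × Fin m) ℂ, IsDensity ρ →
      traceNorm
        (applyChoi ((1 - α) • JDelta m + (α / ((m : ℝ) - 1)) •
            ((1 : Matrix (Fin m × Fin m) (Fin m × Fin m) ℂ) - JDelta m)) ρ
          - applyChoi (JDelta m) ρ) ≤ 2 * α) ∧
    (∀ ρ₀ : Matrix (R × Fin m) (R × Fin m) ℂ,
      ρ₀ = Matrix.single ((default : R), (⟨0, by omega⟩ : Fin m))
            ((default : R), (⟨0, by omega⟩ : Fin m)) (1 : ℂ) →
      traceNorm
        (applyChoi ((1 - α) • JDelta m + (α / ((m : ℝ) - 1)) •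
            ((1 : Matrix (Fin m × Fin m) (Fin m × Fin m) ℂ) - JDelta m)) ρ₀
          - applyChoi (JDelta m) ρ₀) = 2 * α) := by
  have hm1 : (0:ℝ) < (m:ℝ) - 1 := by
    have : (2:ℝ) ≤ (m:ℝ) := by exact_mod_cast hm
    linarith
  set β : ℝ := α / ((m:ℝ) - 1) with hβdef
  have hβ : 0 ≤ β := div_nonneg hα₀ hm1.le
  have hβα : ((m:ℝ) - 1) * β = α := by
    rw [hβdef]; field_simp
  constructor
  · -- the inequality
    rintro ρ ⟨hpsd, htr⟩
    set Pm : Matrix (R × Fin m) (R × Fin m) ℂ :=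
      β • ∑ b : Fin m, ∑ a ∈ Finset.univ.erase b, MM ρ a b with hPm
    set Nm : Matrix (R × Fin m) (R × Fin m) ℂ := α • ∑ b : Fin m, MM ρ b b with hNm
    have hPpsd : Pm.PosSemidef := posSemidef_real_smul
      (posSemidef_sum _ _ fun b _ => posSemidef_sum _ _ fun a _ => MM_posSemidef hpsd a b) hβ
    have hNpsd : Nm.PosSemidef := posSemidef_real_smul
      (posSemidef_sum _ _ fun b _ => MM_posSemidef hpsd b b) hα₀
    have hXeq : applyChoi ((1 - α) • JDelta m + β •
          ((1 : Matrix (Fin m × Fin m) (Fin m × Fin m) ℂ) - JDelta m)) ρ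
        - applyChoi (JDelta m) ρ = Pm - Nm := by
      rw [applyChoi_expand]
      ext p q
      rw [Matrix.sub_apply, hPm, hNm, Matrix.smul_apply, Matrix.smul_apply,
        sumMM_apply, sumMMdiag_apply]
      by_cases h : p.2 = q.2
      · simp only [h, if_true, Matrix.of_apply, Complex.real_smul]
        ring
      · simp [h]
    rw [hXeq]
    have htrMM : ∀ a b : Fin m, (MM ρ a b).trace = ∑ r : R, ρ (r, a) (r, a) := MM_trace ρ
    have hT : ∑ a : Fin m, ∑ r : R, ρ (r, a) (r, a) = 1 := by
      have h5 : ρ.trace = ∑ r : R, ∑ a : Fin m, ρ (r, a) (r, a) := by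
        rw [Matrix.trace, Fintype.sum_prod_type]; rfl
      rw [Finset.sum_comm, ← h5, htr]
    have htrP : Pm.trace = ((α : ℝ) : ℂ) := by
      rw [hPm, Matrix.trace_smul, Matrix.trace_sum]
      simp only [Matrix.trace_sum, htrMM]
      have : ∀ b : Fin m, ∑ a ∈ Finset.univ.erase b, ∑ r : R, ρ (r, a) (r, a)
          = 1 - ∑ r : R, ρ (r, b) (r, b) := by
        intro b
        rw [Finset.sum_erase_eq_sub (Finset.mem_univ b), hT]
      rw [Finset.sum_congr rfl fun b _ => this b, Finset.sum_sub_distrib, Finset.sum_const,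
        Finset.card_univ, Fintype.card_fin, hT, Complex.real_smul]
      have hc : (m • (1:ℂ) - 1) = ((((m:ℝ) - 1) : ℝ) : ℂ) := by
        push_cast [nsmul_eq_mul]; ring
      rw [hc, ← Complex.ofReal_mul, mul_comm, hβα]
    have htrN : Nm.trace = ((α : ℝ) : ℂ) := by
      rw [hNm, Matrix.trace_smul, Matrix.trace_sum]
      simp only [htrMM]
      rw [hT, Complex.real_smul, mul_one]
    calc traceNorm (Pm - Nm) ≤ (Pm.trace + Nm.trace).re := traceNorm_sub_le' hPpsd hNpsd
      _ = 2 * α := by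
          rw [htrP, htrN]
          rw [← Complex.ofReal_add, Complex.ofReal_re]
          ring
  · -- the equality case
    intro ρ₀ h₀
    subst h₀
    set z0 : Fin m := ⟨0, by omega⟩ with hz0
    set d : R := default with hd
    set f : R × Fin m → ℝ := fun u => if u.1 = d then (if u.2 = z0 then -α else β) else 0
      with hf
    have hstd : ∀ u v : R × Fin m, Matrix.single (d, z0) (d, z0) (1 : ℂ) u v
        = if u.1 = d ∧ u.2 = z0 ∧ v.1 = d ∧ v.2 = z0 then 1 else 0 := by
      intro u v
      simp only [Matrix.single, Matrix.of_apply]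
      refine if_congr ?_ rfl rfl
      constructor
      · rintro ⟨h1, h2⟩
        simp [← h1, ← h2]
      · rintro ⟨a, b, c, e⟩
        exact ⟨Prod.ext a.symm b.symm, Prod.ext c.symm e.symm⟩
    have hX : applyChoi ((1 - α) • JDelta m + β •
          ((1 : Matrix (Fin m × Fin m) (Fin m × Fin m) ℂ) - JDelta m))
            (Matrix.single (d, z0) (d, z0) (1 : ℂ))
        - applyChoi (JDelta m) (Matrix.single (d, z0) (d, z0) (1 : ℂ))
        = Matrix.diagonal (fun u => ((f u : ℝ) : ℂ)) := by
      rw [applyChoi_expand]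
      ext p q
      rw [Matrix.of_apply]
      have hsum : ∑ a : Fin m, Matrix.single (d, z0) (d, z0) (1 : ℂ) (p.1, a) (q.1, a)
          = if p.1 = d ∧ q.1 = d then 1 else 0 := by
        simp only [hstd]
        by_cases h1 : p.1 = d <;> by_cases h2 : q.1 = d <;>
          simp [h1, h2, ite_and, Finset.sum_ite_eq', Finset.sum_const_zero,
            Finset.sum_ite_irrel]
      rw [hsum, hstd, Matrix.diagonal_apply]
      by_cases hpq : p = q
      · subst hpq
        rw [if_pos rfl]
        simp only [hf]
        by_cases h1 : p.1 = d <;> by_cases h4 : p.2 = z0 <;>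
          simp [h1, h4] <;> push_cast <;> ring
      · rw [if_neg hpq]
        by_cases h3 : p.2 = q.2
        · have hne : ¬(p.1 = d ∧ q.1 = d) := fun ⟨a, b⟩ => hpq (Prod.ext (a.trans b.symm) h3)
          have hne2 : ¬((p.1, p.2).1 = d ∧ (p.1, p.2).2 = z0 ∧ (q.1, p.2).1 = d ∧
              (q.1, p.2).2 = z0) := fun ⟨a, b, c, e⟩ => hpq (Prod.ext (a.trans c.symm) h3)
          rw [if_pos h3, if_neg hne, if_neg hne2]
          ring
        · rw [if_neg h3]
    rw [hX, traceNorm_diagonal_real']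
    rw [Fintype.sum_prod_type]
    have step1 : ∀ r : R, ∑ b : Fin m, |f (r, b)| =
        if r = d then ∑ b : Fin m, (if b = z0 then α else β) else 0 := by
      intro r
      by_cases h : r = d
      · simp only [hf, h, if_true]
        refine Finset.sum_congr rfl fun b _ => ?_
        by_cases hb : b = z0 <;> simp [hb, abs_of_nonneg hα₀, abs_of_nonneg hβ]
      · simp [hf, h]
    have hrw1 : (∑ r : R, ∑ b : Fin m, |f (r, b)|)
        = ∑ r : R, (if r = d then ∑ b : Fin m, (if b = z0 then α else β) else 0) :=
      Finset.sum_congr rfl fun r _ => step1 r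
    rw [hrw1, Finset.sum_ite_eq', if_pos (Finset.mem_univ d)]
    have step2 : ∀ b : Fin m, (if b = z0 then α else β) = β + (if b = z0 then α - β else 0) := by
      intro b; by_cases hb : b = z0 <;> simp [hb]
    have hrw2 : (∑ b : Fin m, (if b = z0 then α else β))
        = ∑ b : Fin m, (β + (if b = z0 then α - β else 0)) :=
      Finset.sum_congr rfl fun b _ => step2 b
    rw [hrw2, Finset.sum_add_distrib, Finset.sum_const,
      Finset.card_univ, Fintype.card_fin, Finset.sum_ite_eq', if_pos (Finset.mem_univ z0),
      nsmul_eq_mul]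
    nlinarith [hβα]

end ICO
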